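/- As the integer k → ∞, log ĝ(k) − log ∏_{√k < p ≤ k, p prime} p/(p − a_{0,p}(k)) = O(√k · log log k). -/

import Mathlib

open Finset Filter Real Asymptotics

/-- `digit i p k` is the `i`-th digit of `k` in base `p`, i.e. `⌊k / p^i⌋ mod p`. -/
def digit (i p k : ℕ) : ℕ := (k / p ^ i) % p

/-- `Mk k = ∏_{p ≤ k, p prime} p^(⌊log_p k⌋ + 1)`. -/
def Mk (k : ℕ) : ℕ :=
  ∏ p ∈ (Finset.range (k + 1)).filter Nat.Prime, p ^ (Nat.log p k + 1)

/-- `Rk k = ∏_{p ≤ k, p prime} ∏_{i=0}^{⌊log_p k⌋} (p − a_{i,p}(k))`. -/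
def Rk (k : ℕ) : ℕ :=
  ∏ p ∈ (Finset.range (k + 1)).filter Nat.Prime,
    ∏ i ∈ Finset.range (Nat.log p k + 1), (p - digit i p k)

/-- The heuristic estimate `ĝ(k) = M_k / R_k` for the Erdős–Selfridge function. -/
def ghat (k : ℕ) : ℚ := (Mk k : ℚ) / (Rk k : ℚ)



lemma digit_lt {p : ℕ} (hp : 0 < p) (i k : ℕ) : digit i p k < p := Nat.mod_lt _ hp

lemma sub_digit_pos {p : ℕ} (hp : 0 < p) (i k : ℕ) : 0 < p - digit i p k :=
  Nat.sub_pos_of_lt (digit_lt hp i k)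

lemma cast_sub_digit {p : ℕ} (hp : 0 < p) (i k : ℕ) :
    ((p - digit i p k : ℕ) : ℝ) = (p : ℝ) - (digit i p k : ℝ) :=
  Nat.cast_sub (digit_lt hp i k).le

lemma log_sub_digit_nonneg {p : ℕ} (hp : 0 < p) (i k : ℕ) :
    0 ≤ Real.log ((p - digit i p k : ℕ)) := by
  have h1 : (1 : ℕ) ≤ p - digit i p k := sub_digit_pos hp i k
  apply Real.log_nonneg
  exact_mod_cast h1

lemma log_sub_digit_le {p : ℕ} (hp : 0 < p) (i k : ℕ) :
    Real.log ((p - digit i p k : ℕ)) ≤ Real.log p := by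
  apply Real.log_le_log (by exact_mod_cast sub_digit_pos hp i k)
  exact_mod_cast Nat.sub_le p (digit i p k)

lemma term_nonneg {p : ℕ} (hp : 0 < p) (i k : ℕ) :
    0 ≤ Real.log p - Real.log ((p - digit i p k : ℕ)) :=
  sub_nonneg.2 (log_sub_digit_le hp i k)




lemma prime_pos_of_mem {k p : ℕ} (hp : p ∈ (Finset.range (k + 1)).filter Nat.Prime) : 0 < p :=
  (Finset.mem_filter.1 hp).2.pos

lemma Mk_pos (k : ℕ) : 0 < Mk k :=
  Finset.prod_pos fun p hp => pow_pos (prime_pos_of_mem hp) _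

lemma Rk_pos (k : ℕ) : 0 < Rk k :=
  Finset.prod_pos fun p hp => Finset.prod_pos fun i _ => sub_digit_pos (prime_pos_of_mem hp) i k

lemma log_ghat_eq (k : ℕ) :
    Real.log ((ghat k : ℝ)) =
      ∑ p ∈ (Finset.range (k + 1)).filter Nat.Prime,
        ∑ i ∈ Finset.range (Nat.log p k + 1),
          (Real.log p - Real.log ((p - digit i p k : ℕ))) := by
  have hM : (Mk k : ℝ) ≠ 0 := by exact_mod_cast (Mk_pos k).ne'
  have hR : (Rk k : ℝ) ≠ 0 := by exact_mod_cast (Rk_pos k).ne'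
  have hg : ((ghat k : ℚ) : ℝ) = (Mk k : ℝ) / (Rk k : ℝ) := by
    unfold ghat; push_cast; ring
  rw [hg, Real.log_div hM hR]
  have hMlog : Real.log (Mk k) =
      ∑ p ∈ (Finset.range (k + 1)).filter Nat.Prime,
        ∑ i ∈ Finset.range (Nat.log p k + 1), Real.log p := by
    unfold Mk
    push_cast
    rw [Real.log_prod]
    · refine Finset.sum_congr rfl fun p hp => ?_
      rw [Real.log_pow]
      simp [Finset.sum_const, Finset.card_range, nsmul_eq_mul]
    · intro p hp
      have := prime_pos_of_mem hp
      positivity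
  have hRlog : Real.log (Rk k) =
      ∑ p ∈ (Finset.range (k + 1)).filter Nat.Prime,
        ∑ i ∈ Finset.range (Nat.log p k + 1), Real.log ((p - digit i p k : ℕ)) := by
    unfold Rk
    push_cast
    rw [Real.log_prod]
    · refine Finset.sum_congr rfl fun p hp => ?_
      rw [Real.log_prod]
      intro i _
      exact_mod_cast (sub_digit_pos (prime_pos_of_mem hp) i k).ne'
    · intro p hp
      have : ∀ i ∈ Finset.range (Nat.log p k + 1), (0:ℝ) < ((p - digit i p k : ℕ) : ℝ) := by
        intro i _; exact_mod_cast sub_digit_pos (prime_pos_of_mem hp) i k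
      exact ne_of_gt (Finset.prod_pos this)
  rw [hMlog, hRlog, ← Finset.sum_sub_distrib]
  exact Finset.sum_congr rfl fun p _ => (Finset.sum_sub_distrib _ _).symm

lemma log_main_eq (k : ℕ) :
    Real.log (∏ p ∈ (Finset.range (k + 1)).filter (fun p => p.Prime ∧ k < p * p),
          (p : ℝ) / (p - digit 0 p k)) =
      ∑ p ∈ (Finset.range (k + 1)).filter (fun p => p.Prime ∧ k < p * p),
        (Real.log p - Real.log ((p - digit 0 p k : ℕ))) := by
  rw [Real.log_prod]
  · refine Finset.sum_congr rfl fun p hp => ?_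
    have hp0 : 0 < p := (Finset.mem_filter.1 hp).2.1.pos
    have hc : ((p - digit 0 p k : ℕ) : ℝ) = (p : ℝ) - (digit 0 p k : ℝ) := cast_sub_digit hp0 0 k
    rw [← hc, Real.log_div (by exact_mod_cast hp0.ne') (by exact_mod_cast (sub_digit_pos hp0 0 k).ne')]
  · intro p hp
    have hp0 : 0 < p := (Finset.mem_filter.1 hp).2.1.pos
    have hc : ((p - digit 0 p k : ℕ) : ℝ) = (p : ℝ) - (digit 0 p k : ℝ) := cast_sub_digit hp0 0 k
    rw [← hc]
    have h1 : (0:ℝ) < ((p - digit 0 p k : ℕ) : ℝ) := by exact_mod_cast sub_digit_pos hp0 0 k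
    positivity

/-- The difference splits into small primes and large primes parts. -/
lemma diff_eq (k : ℕ) :
    Real.log ((ghat k : ℝ)) -
      Real.log (∏ p ∈ (Finset.range (k + 1)).filter (fun p => p.Prime ∧ k < p * p),
          (p : ℝ) / (p - digit 0 p k)) =
      (∑ p ∈ (Finset.range (k + 1)).filter (fun p => p.Prime ∧ ¬ k < p * p),
        ∑ i ∈ Finset.range (Nat.log p k + 1),
          (Real.log p - Real.log ((p - digit i p k : ℕ)))) +
      ∑ p ∈ (Finset.range (k + 1)).filter (fun p => p.Prime ∧ k < p * p),
        ((∑ i ∈ Finset.range (Nat.log p k + 1),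
          (Real.log p - Real.log ((p - digit i p k : ℕ)))) -
          (Real.log p - Real.log ((p - digit 0 p k : ℕ)))) := by
  rw [log_ghat_eq, log_main_eq]
  rw [← Finset.sum_filter_add_sum_filter_not ((Finset.range (k + 1)).filter Nat.Prime)
    (fun p => k < p * p), Finset.filter_filter, Finset.filter_filter]
  simp only [Finset.sum_sub_distrib]
  ring

lemma small_primes_eq (k : ℕ) (hk : 1 ≤ k) :
    (Finset.range (k + 1)).filter (fun p => p.Prime ∧ ¬ k < p * p) =
      (Finset.range (Nat.sqrt k + 1)).filter Nat.Prime := by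
  ext p
  simp only [Finset.mem_filter, Finset.mem_range, Nat.lt_succ_iff, not_lt]
  constructor
  · rintro ⟨hpk, hp, hpp⟩
    exact ⟨Nat.le_sqrt.2 hpp, hp⟩
  · rintro ⟨hps, hp⟩
    have hpp : p * p ≤ k := Nat.le_sqrt.1 hps
    refine ⟨le_trans hps ?_, hp, hpp⟩
    have := Nat.sqrt_le_self k
    omega

lemma small_sum_le (k : ℕ) (hk : 1 ≤ k) :
    (∑ p ∈ (Finset.range (k + 1)).filter (fun p => p.Prime ∧ ¬ k < p * p),
        ∑ i ∈ Finset.range (Nat.log p k + 1),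
          (Real.log p - Real.log ((p - digit i p k : ℕ)))) ≤
      4 * ((Nat.sqrt k : ℝ) * Real.log 4) +
        ((Nat.sqrt (Nat.sqrt k) : ℝ) + 1) * Real.log k := by
  rw [small_primes_eq k hk]
  set s := Nat.sqrt k with hs
  have hlogk : (0:ℝ) ≤ Real.log k := Real.log_nonneg (by exact_mod_cast hk)
  have step1 : ∀ p ∈ (Finset.range (s + 1)).filter Nat.Prime,
      (∑ i ∈ Finset.range (Nat.log p k + 1),
          (Real.log p - Real.log ((p - digit i p k : ℕ)))) ≤
        4 * Real.log p + (if p ^ 4 ≤ k then Real.log k else 0) := by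
    intro p hp
    have hprime : p.Prime := (Finset.mem_filter.1 hp).2
    have hp0 : 0 < p := hprime.pos
    have hp1 : (1:ℝ) ≤ (p:ℝ) := by exact_mod_cast hp0
    have hlogp : (0:ℝ) ≤ Real.log p := Real.log_nonneg hp1
    have h1 : (∑ i ∈ Finset.range (Nat.log p k + 1),
        (Real.log p - Real.log ((p - digit i p k : ℕ)))) ≤
        (Nat.log p k + 1 : ℝ) * Real.log p := by
      calc _ ≤ ∑ i ∈ Finset.range (Nat.log p k + 1), Real.log p :=
            Finset.sum_le_sum fun i _ => by
              have := log_sub_digit_nonneg hp0 i k; linarith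
        _ = (Nat.log p k + 1 : ℝ) * Real.log p := by
            rw [Finset.sum_const, Finset.card_range, nsmul_eq_mul]; push_cast; ring
    refine h1.trans ?_
    by_cases h4 : Nat.log p k + 1 ≤ 4
    · have hL : (Nat.log p k + 1 : ℝ) ≤ 4 := by exact_mod_cast h4
      have hite : (0:ℝ) ≤ (if p ^ 4 ≤ k then Real.log k else 0) := by
        split_ifs <;> simp [hlogk]
      nlinarith
    · push_neg at h4
      have hL4 : 4 ≤ Nat.log p k := by omega
      have hp4 : p ^ 4 ≤ k :=
        le_trans (Nat.pow_le_pow_right hp0 hL4) (Nat.pow_log_le_self p (by omega))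
      rw [if_pos hp4]
      have h2 : ((p : ℝ)) ^ (Nat.log p k - 3) ≤ (k : ℝ) := by
        exact_mod_cast le_trans (Nat.pow_le_pow_right hp0 (by omega)) (Nat.pow_log_le_self p (by omega))
      have h3 : ((Nat.log p k - 3 : ℕ) : ℝ) * Real.log p ≤ Real.log k := by
        rw [← Real.log_pow]
        exact Real.log_le_log (by positivity) h2
      have hcast : ((Nat.log p k - 3 : ℕ) : ℝ) = (Nat.log p k : ℝ) - 3 := by
        have : 3 ≤ Nat.log p k := by omega
        push_cast [this]; ring
      rw [hcast] at h3
      nlinarith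
  have hθ : (∑ p ∈ (Finset.range (s + 1)).filter Nat.Prime, Real.log p) ≤
      (s : ℝ) * Real.log 4 := by
    have hpos : ∀ p ∈ (Finset.range (s + 1)).filter Nat.Prime, (p:ℝ) ≠ 0 := by
      intro p hp
      exact_mod_cast (prime_pos_of_mem hp).ne'
    rw [← Real.log_prod hpos]
    have hprod : (∏ p ∈ (Finset.range (s + 1)).filter Nat.Prime, (p:ℝ)) =
        ((primorial s : ℕ) : ℝ) := by
      rw [primorial]; push_cast; rfl
    rw [hprod]
    calc Real.log ((primorial s : ℕ) : ℝ) ≤ Real.log ((4:ℝ) ^ s) := by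
          apply Real.log_le_log
          · exact_mod_cast primorial_pos s
          · exact_mod_cast primorial_le_4_pow s
      _ = (s : ℝ) * Real.log 4 := by rw [Real.log_pow]
  have hite : (∑ p ∈ (Finset.range (s + 1)).filter Nat.Prime,
      (if p ^ 4 ≤ k then Real.log k else 0)) ≤ ((Nat.sqrt s : ℝ) + 1) * Real.log k := by
    rw [← Finset.sum_filter]
    rw [Finset.sum_const, nsmul_eq_mul]
    have hcard : (((Finset.range (s + 1)).filter Nat.Prime).filter (fun p => p ^ 4 ≤ k)).card ≤
        Nat.sqrt s + 1 := by
      have hsub : ((Finset.range (s + 1)).filter Nat.Prime).filter (fun p => p ^ 4 ≤ k) ⊆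
          Finset.range (Nat.sqrt s + 1) := by
        intro p hp
        simp only [Finset.mem_filter, Finset.mem_range] at hp ⊢
        have h4 : (p * p) * (p * p) ≤ k := by
          have : p ^ 4 = (p * p) * (p * p) := by ring
          omega
        have h2 : p * p ≤ s := Nat.le_sqrt.2 h4
        have : p ≤ Nat.sqrt s := Nat.le_sqrt.2 h2
        omega
      simpa using Finset.card_le_card hsub
    have : ((((Finset.range (s + 1)).filter Nat.Prime).filter (fun p => p ^ 4 ≤ k)).card : ℝ) ≤
        (Nat.sqrt s : ℝ) + 1 := by exact_mod_cast hcard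
    nlinarith
  calc (∑ p ∈ (Finset.range (s + 1)).filter Nat.Prime,
        ∑ i ∈ Finset.range (Nat.log p k + 1),
          (Real.log p - Real.log ((p - digit i p k : ℕ)))) ≤
      ∑ p ∈ (Finset.range (s + 1)).filter Nat.Prime,
        (4 * Real.log p + (if p ^ 4 ≤ k then Real.log k else 0)) :=
        Finset.sum_le_sum step1
    _ = 4 * (∑ p ∈ (Finset.range (s + 1)).filter Nat.Prime, Real.log p) +
        ∑ p ∈ (Finset.range (s + 1)).filter Nat.Prime,
          (if p ^ 4 ≤ k then Real.log k else 0) := by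
        rw [Finset.sum_add_distrib, Finset.mul_sum]
    _ ≤ 4 * ((s : ℝ) * Real.log 4) + ((Nat.sqrt s : ℝ) + 1) * Real.log k := by
        nlinarith


lemma pow_self_le_exp_mul_factorial (N : ℕ) :
    (N : ℝ) ^ N ≤ Real.exp 1 ^ N * (Nat.factorial N : ℝ) := by
  induction N with
  | zero => simp
  | succ n ih =>
    have he1 : (1:ℝ) ≤ Real.exp 1 := by
      have := Real.add_one_le_exp (1:ℝ); linarith
    have hstep : ((n : ℝ) + 1) ^ n ≤ Real.exp 1 ^ (n + 1) * (Nat.factorial n : ℝ) := by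
      rcases Nat.eq_zero_or_pos n with h | h
      · subst h; simpa using he1
      · have hn0 : (0:ℝ) < n := by exact_mod_cast h
        have h1 : (n : ℝ) + 1 ≤ (n:ℝ) * Real.exp (1 / n) := by
          have := Real.add_one_le_exp ((1:ℝ)/n)
          calc (n:ℝ) + 1 = (n:ℝ) * (1/n + 1) := by field_simp; ring
            _ ≤ (n:ℝ) * Real.exp (1/n) := by nlinarith
        have h2 : ((n : ℝ) + 1) ^ n ≤ ((n:ℝ) * Real.exp (1/n)) ^ n := by
          apply pow_le_pow_left₀ (by positivity) h1
        have h3 : ((n:ℝ) * Real.exp (1/n)) ^ n = (n:ℝ)^n * Real.exp 1 := by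
          rw [mul_pow, ← Real.exp_nat_mul]
          congr 2
          field_simp
        calc ((n : ℝ) + 1) ^ n ≤ (n:ℝ)^n * Real.exp 1 := by rw [← h3]; exact h2
          _ ≤ (Real.exp 1 ^ n * (Nat.factorial n : ℝ)) * Real.exp 1 := by
              have : (0:ℝ) < Real.exp 1 := Real.exp_pos 1
              have hf : (0:ℝ) < (Nat.factorial n : ℝ) := by exact_mod_cast Nat.factorial_pos n
              nlinarith [ih]
          _ = Real.exp 1 ^ (n + 1) * (Nat.factorial n : ℝ) := by ring
    calc ((n + 1 : ℕ) : ℝ) ^ (n + 1) = ((n:ℝ) + 1) * ((n:ℝ) + 1) ^ n := by push_cast; ring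
      _ ≤ ((n:ℝ) + 1) * (Real.exp 1 ^ (n + 1) * (Nat.factorial n : ℝ)) := by
          apply mul_le_mul_of_nonneg_left hstep (by positivity)
      _ = Real.exp 1 ^ (n + 1) * (((n+1) * Nat.factorial n : ℕ) : ℝ) := by push_cast; ring
      _ = Real.exp 1 ^ (n + 1) * ((Nat.factorial (n+1) : ℕ) : ℝ) := by rw [Nat.factorial_succ]

lemma sum_log_bound (N : ℕ) (hN : 1 ≤ N) :
    (∑ i ∈ Finset.range N, (Real.log (4 * (N:ℝ)) - Real.log ((i:ℝ) + 1))) ≤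
      (N : ℝ) * (Real.log 4 + 1) := by
  have hfac : (∑ i ∈ Finset.range N, Real.log ((i:ℝ) + 1)) = Real.log (Nat.factorial N : ℝ) := by
    rw [← Real.log_prod]
    · congr 1
      rw [← Finset.prod_range_add_one_eq_factorial N]
      push_cast
      rfl
    · intro i _; positivity
  have hNpos : (0:ℝ) < N := by exact_mod_cast hN
  have hlogfac : (N:ℝ) * Real.log N ≤ (N:ℝ) + Real.log (Nat.factorial N : ℝ) := by
    have h := pow_self_le_exp_mul_factorial N
    have h1 : Real.log ((N:ℝ)^N) ≤ Real.log (Real.exp 1 ^ N * (Nat.factorial N : ℝ)) :=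
      Real.log_le_log (by positivity) h
    rw [Real.log_pow, Real.log_mul (by positivity) (by exact_mod_cast (Nat.factorial_pos N).ne'),
      Real.log_pow, Real.log_exp] at h1
    push_cast at h1 ⊢
    linarith
  rw [Finset.sum_sub_distrib, hfac, Finset.sum_const, Finset.card_range, nsmul_eq_mul]
  have hlog4N : Real.log (4 * (N:ℝ)) = Real.log 4 + Real.log N :=
    Real.log_mul (by norm_num) hNpos.ne'
  rw [hlog4N]
  nlinarith [hlogfac]

lemma sum_inv_sq_le (N : ℕ) (hN : 1 ≤ N) (M : ℕ) :
    (∑ n ∈ Finset.Ioc N M, (1:ℝ) / (n:ℝ)^2) ≤ 1 / N := by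
  have key : ∀ M : ℕ, N ≤ M → (∑ n ∈ Finset.Ioc N M, (1:ℝ) / (n:ℝ)^2) ≤ 1/N - 1/M := by
    intro M
    induction M with
    | zero => intro h; omega
    | succ m ih =>
      intro h
      rcases Nat.lt_or_ge N (m+1) with h2 | h2
      · have hNm : N ≤ m := by omega
        rw [Finset.sum_Ioc_succ_top hNm]
        have hm : (0:ℝ) < m := by exact_mod_cast (by omega : 0 < m)
        have step : (1:ℝ) / ((m:ℝ)+1)^2 ≤ 1/m - 1/((m:ℝ)+1) := by
          rw [div_sub_div _ _ (by positivity) (by positivity)]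
          rw [div_le_div_iff₀ (by positivity) (by positivity)]
          ring_nf
          nlinarith
        have := ih hNm
        push_cast
        push_cast at this
        linarith
      · have : N = m + 1 := by omega
        subst this
        simp
  rcases Nat.lt_or_ge M N with h | h
  · rw [Finset.Ioc_eq_empty (by omega)]
    simp
    try positivity
  · have hM : (0:ℝ) < M := by exact_mod_cast (by omega : 0 < M)
    have h0 : (0:ℝ) ≤ 1/M := by positivity
    linarith [key M h]



section perprime
variable {k p : ℕ}

lemma perprime_large' (hp : p.Prime) (hpk : p ≤ k) (hkp : k < p * p) :
    Real.log p - Real.log ((p - digit 1 p k : ℕ)) ≤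
      Real.log ((p * p : ℕ) : ℝ) - Real.log ((p * p - k : ℕ) : ℝ) := by
  have hp0 : 0 < p := hp.pos
  have hq : digit 1 p k = k / p := by
    unfold digit
    rw [pow_one, Nat.mod_eq_of_lt ((Nat.div_lt_iff_lt_mul hp0).2 hkp)]
  set q := k / p with hqdef
  have hqp : q < p := (Nat.div_lt_iff_lt_mul hp0).2 hkp
  have hmul : p * q ≤ k := by
    rw [hqdef, mul_comm]
    exact Nat.div_mul_le_self k p
  have hsub : p * p - k ≤ (p - q) * p := by
    have h1 : (p - q) * p = p * p - q * p := by
      exact tsub_mul p q p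
    have h2 : q * p ≤ k := by rwa [mul_comm] at hmul
    omega
  have hppk : 1 ≤ p * p - k := by omega
  have hpq1 : 1 ≤ p - q := by omega
  -- cast to ℝ
  have c1 : (0:ℝ) < ((p * p - k : ℕ) : ℝ) := by exact_mod_cast hppk
  have c2 : (0:ℝ) < ((p - q : ℕ) : ℝ) := by exact_mod_cast hpq1
  have c3 : (0:ℝ) < (p:ℝ) := by exact_mod_cast hp0
  have key : Real.log ((p * p - k : ℕ) : ℝ) ≤ Real.log ((p - q : ℕ) : ℝ) + Real.log p := by
    have : ((p * p - k : ℕ) : ℝ) ≤ ((p - q : ℕ) : ℝ) * (p : ℝ) := by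
      exact_mod_cast hsub
    calc Real.log ((p * p - k : ℕ) : ℝ) ≤ Real.log (((p - q : ℕ) : ℝ) * (p : ℝ)) :=
          Real.log_le_log c1 this
      _ = Real.log ((p - q : ℕ) : ℝ) + Real.log p := Real.log_mul c2.ne' c3.ne'
  have hpp : Real.log ((p * p : ℕ) : ℝ) = Real.log p + Real.log p := by
    push_cast
    exact Real.log_mul c3.ne' c3.ne'
  rw [hq]
  linarith [key, hpp]
end perprime

lemma parta_pt (k n : ℕ) (hn1 : Nat.sqrt k < n) (hn2 : n ≤ 2 * Nat.sqrt k + 1) :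
    Real.log ((n*n : ℕ) : ℝ) - Real.log ((n*n - k : ℕ) : ℝ) ≤
      (Real.log (4*((Nat.sqrt k : ℝ)+1)) - Real.log ((n - Nat.sqrt k : ℕ) : ℝ)) +
        (if n = Nat.sqrt k + 1 then Real.log ((Nat.sqrt k : ℝ)+1) else 0) := by
  set s := Nat.sqrt k with hs
  have hks : k < (s+1) * (s+1) := Nat.lt_succ_sqrt k
  have hnnk : k < n * n := lt_of_lt_of_le hks (Nat.mul_le_mul (by omega) (by omega))
  have hppk : 1 ≤ n * n - k := by omega
  have c1 : (0:ℝ) < ((n*n - k : ℕ) : ℝ) := by exact_mod_cast hppk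
  have hub : Real.log ((n*n : ℕ) : ℝ) ≤ Real.log (4*((s:ℝ)+1)) + Real.log ((s:ℝ)+1) := by
    have e1 : (4*((s:ℝ)+1)) * ((s:ℝ)+1) = (2*(s:ℝ)+2)*(2*(s:ℝ)+2) := by ring
    have h2 : ((n*n : ℕ) : ℝ) ≤ (2*(s:ℝ)+2)*(2*(s:ℝ)+2) := by
      have : n * n ≤ (2*s+2) * (2*s+2) := Nat.mul_le_mul (by omega) (by omega)
      push_cast
      exact_mod_cast this
    calc Real.log ((n*n : ℕ) : ℝ) ≤ Real.log ((2*(s:ℝ)+2)*(2*(s:ℝ)+2)) := by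
          apply Real.log_le_log (by exact_mod_cast Nat.mul_pos (by omega) (by omega)) h2
      _ = Real.log ((4*((s:ℝ)+1)) * ((s:ℝ)+1)) := by rw [e1]
      _ = Real.log (4*((s:ℝ)+1)) + Real.log ((s:ℝ)+1) := by
          rw [Real.log_mul (by positivity) (by positivity)]
  rcases eq_or_lt_of_le (by omega : s + 1 ≤ n) with heq | hlt
  · rw [if_pos heq.symm]
    have h1 : (n - s : ℕ) = 1 := by omega
    rw [h1]
    have : Real.log ((1:ℕ):ℝ) = 0 := by norm_num
    rw [this]
    have hlog0 : 0 ≤ Real.log ((n*n - k : ℕ) : ℝ) := Real.log_nonneg (by exact_mod_cast hppk)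
    linarith
  · rw [if_neg (by omega)]
    have hlow : (n - s) * (s + 1) ≤ n * n - k := by
      zify [le_of_lt hnnk, (by omega : s ≤ n)]
      nlinarith [mul_nonneg (by push_cast; omega : (0:ℤ) ≤ (n:ℤ) - s - 2) (by positivity : (0:ℤ) ≤ (s:ℤ)),
        mul_nonneg (by push_cast; omega : (0:ℤ) ≤ (n:ℤ) - s - 1) (by push_cast; omega : (0:ℤ) ≤ (n:ℤ) - s),
        (by exact_mod_cast hks : (k:ℤ) < ((s:ℤ)+1) * ((s:ℤ)+1))]
    have hcast : ((n - s : ℕ) : ℝ) * ((s:ℝ)+1) ≤ ((n*n - k : ℕ) : ℝ) := by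
      have h := hlow
      zify [(by omega : s ≤ n), le_of_lt hnnk] at h
      push_cast [(by omega : s ≤ n), le_of_lt hnnk]
      exact_mod_cast h
    have hns1 : (1:ℝ) ≤ ((n - s : ℕ) : ℝ) := by exact_mod_cast (by omega : 1 ≤ n - s)
    have hlog2 : Real.log (((n - s : ℕ) : ℝ) * ((s:ℝ)+1)) ≤ Real.log ((n*n - k : ℕ) : ℝ) :=
      Real.log_le_log (by positivity) hcast
    rw [Real.log_mul (by positivity) (by positivity)] at hlog2
    linarith

lemma partb_pt (k n : ℕ) (hn1 : 2 * Nat.sqrt k + 1 < n) (hn2 : n ≤ k) :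
    Real.log ((n*n : ℕ) : ℝ) - Real.log ((n*n - k : ℕ) : ℝ) ≤
      (4*(k:ℝ)/3) * (1/(n:ℝ)^2) := by
  set s := Nat.sqrt k with hs
  have hks : k < (s+1) * (s+1) := Nat.lt_succ_sqrt k
  have h4k : 4 * k < n * n := by
    calc 4 * k < 4 * ((s+1)*(s+1)) := by omega
      _ = (2*s+2) * (2*s+2) := by ring
      _ ≤ n * n := Nat.mul_le_mul (by omega) (by omega)
  have hnnk : k < n * n := by omega
  have hn0 : 0 < n := by omega
  have cn : (0:ℝ) < (n:ℝ) := by exact_mod_cast hn0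
  have c0 : ((n*n - k : ℕ) : ℝ) = (n:ℝ)^2 - k := by
    push_cast [le_of_lt hnnk]; ring
  have cnn : ((n*n : ℕ) : ℝ) = (n:ℝ)^2 := by push_cast; ring
  have c4 : 4 * (k:ℝ) < (n:ℝ)^2 := by
    have : ((4*k : ℕ) : ℝ) < ((n*n : ℕ) : ℝ) := by exact_mod_cast h4k
    rw [cnn] at this
    push_cast at this
    linarith
  have hpos : (0:ℝ) < (n:ℝ)^2 - k := by nlinarith [Nat.cast_nonneg (α := ℝ) k]
  rw [c0, cnn]
  have hdiv : Real.log ((n:ℝ)^2) - Real.log ((n:ℝ)^2 - k) = Real.log ((n:ℝ)^2 / ((n:ℝ)^2 - k)) :=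
    (Real.log_div (by positivity) hpos.ne').symm
  rw [hdiv]
  have hle : Real.log ((n:ℝ)^2 / ((n:ℝ)^2 - k)) ≤ (n:ℝ)^2 / ((n:ℝ)^2 - k) - 1 :=
    Real.log_le_sub_one_of_pos (by positivity)
  have heq : (n:ℝ)^2 / ((n:ℝ)^2 - k) - 1 = (k:ℝ) / ((n:ℝ)^2 - k) := by
    field_simp
    ring
  rw [heq] at hle
  refine hle.trans ?_
  have hrw : (4*(k:ℝ)/3) * (1/(n:ℝ)^2) = (4*(k:ℝ))/(3*(n:ℝ)^2) := by ring
  rw [hrw, div_le_div_iff₀ hpos (by positivity)]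
  have hk0 : (0:ℝ) ≤ (k:ℝ) := Nat.cast_nonneg k
  nlinarith [mul_nonneg hk0 (by linarith : (0:ℝ) ≤ (n:ℝ)^2 - 4*(k:ℝ))]

lemma large_sum_le (k : ℕ) (hk : 16 ≤ k) :
    (∑ p ∈ (Finset.range (k + 1)).filter (fun p => p.Prime ∧ k < p * p),
        ((∑ i ∈ Finset.range (Nat.log p k + 1),
          (Real.log p - Real.log ((p - digit i p k : ℕ)))) -
          (Real.log p - Real.log ((p - digit 0 p k : ℕ))))) ≤
      ((Nat.sqrt k : ℝ) + 1) * (Real.log 4 + 1) + Real.log ((Nat.sqrt k : ℝ) + 1)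
        + (4/3) * ((Nat.sqrt k : ℝ) + 1) := by
  set s := Nat.sqrt k with hs
  have hs4 : 4 ≤ s := by
    exact Nat.le_sqrt.2 (by omega)
  have hss : s * s ≤ k := Nat.sqrt_le k
  have h2s1 : 2 * s + 1 ≤ k := by
    calc 2 * s + 1 ≤ 3 * s := by omega
      _ ≤ s * s := Nat.mul_le_mul (by omega) le_rfl
      _ ≤ k := hss
  have hks : k < (s+1) * (s+1) := Nat.lt_succ_sqrt k
  -- f
  set f : ℕ → ℝ := fun n => Real.log ((n*n : ℕ) : ℝ) - Real.log ((n*n - k : ℕ) : ℝ) with hf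
  have step1 : (∑ p ∈ (Finset.range (k + 1)).filter (fun p => p.Prime ∧ k < p * p),
        ((∑ i ∈ Finset.range (Nat.log p k + 1),
          (Real.log p - Real.log ((p - digit i p k : ℕ)))) -
          (Real.log p - Real.log ((p - digit 0 p k : ℕ))))) ≤
      ∑ p ∈ (Finset.range (k + 1)).filter (fun p => p.Prime ∧ k < p * p), f p := by
    apply Finset.sum_le_sum
    intro p hp
    simp only [Finset.mem_filter, Finset.mem_range, Nat.lt_succ_iff] at hp
    obtain ⟨hpk, hprime, hkpp⟩ := hp
    have hL : Nat.log p k = 1 := by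
      apply Nat.log_eq_of_pow_le_of_lt_pow
      · simpa using hpk
      · calc k < p * p := hkpp
          _ = p ^ (1+1) := by ring
    rw [hL, Finset.sum_range_succ, Finset.sum_range_one]
    have := perprime_large' hprime hpk hkpp
    simp only [hf]
    linarith
  have fnonneg : ∀ n ∈ Finset.Ioc s k, 0 ≤ f n := by
    intro n hn
    simp only [Finset.mem_Ioc] at hn
    have hnnk : k < n * n := lt_of_lt_of_le hks (Nat.mul_le_mul (by omega) (by omega))
    simp only [hf]
    have h1 : (0:ℝ) < ((n*n - k : ℕ) : ℝ) := by exact_mod_cast (by omega : 0 < n * n - k)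
    have h2 : ((n*n - k : ℕ) : ℝ) ≤ ((n*n : ℕ) : ℝ) := by exact_mod_cast Nat.sub_le _ _
    linarith [Real.log_le_log h1 h2]
  have step2 : (∑ p ∈ (Finset.range (k + 1)).filter (fun p => p.Prime ∧ k < p * p), f p) ≤
      ∑ n ∈ Finset.Ioc s k, f n := by
    apply Finset.sum_le_sum_of_subset_of_nonneg
    · intro p hp
      simp only [Finset.mem_filter, Finset.mem_range, Nat.lt_succ_iff] at hp
      obtain ⟨hpk, _, hkpp⟩ := hp
      simp only [Finset.mem_Ioc]
      refine ⟨?_, hpk⟩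
      by_contra h
      push_neg at h
      exact absurd (le_trans (Nat.mul_le_mul h h) hss) (not_le.2 hkpp)
    · intro n hn _
      exact fnonneg n hn
  have split : (∑ n ∈ Finset.Ioc s k, f n) =
      (∑ n ∈ Finset.Ioc s (2*s+1), f n) + ∑ n ∈ Finset.Ioc (2*s+1) k, f n :=
    (Finset.sum_Ioc_consecutive f (by omega) h2s1).symm
  -- part a
  have parta : (∑ n ∈ Finset.Ioc s (2*s+1), f n) ≤
      ((s:ℝ) + 1) * (Real.log 4 + 1) + Real.log ((s:ℝ) + 1) := by
    have h1 : (∑ n ∈ Finset.Ioc s (2*s+1), f n) ≤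
        ∑ n ∈ Finset.Ioc s (2*s+1),
          ((Real.log (4*((s:ℝ)+1)) - Real.log ((n - s : ℕ) : ℝ)) +
            (if n = s + 1 then Real.log ((s:ℝ)+1) else 0)) := by
      apply Finset.sum_le_sum
      intro n hn
      simp only [Finset.mem_Ioc] at hn
      exact parta_pt k n hn.1 hn.2
    have h2 : (∑ n ∈ Finset.Ioc s (2*s+1),
        (if n = s + 1 then Real.log ((s:ℝ)+1) else 0)) = Real.log ((s:ℝ)+1) := by
      rw [Finset.sum_ite_eq' (Finset.Ioc s (2*s+1)) (s+1) (fun _ => Real.log ((s:ℝ)+1))]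
      rw [if_pos]
      simp only [Finset.mem_Ioc]
      omega
    have h3 : (∑ n ∈ Finset.Ioc s (2*s+1),
        (Real.log (4*((s:ℝ)+1)) - Real.log ((n - s : ℕ) : ℝ))) ≤
        ((s:ℝ) + 1) * (Real.log 4 + 1) := by
      have hIoc : Finset.Ioc s (2*s+1) = Finset.Ico (s+1) (2*s+2) := by
        ext n
        simp only [Finset.mem_Ioc, Finset.mem_Ico]
        omega
      rw [hIoc, Finset.sum_Ico_eq_sum_range]
      have hcard : 2*s+2 - (s+1) = s+1 := by omega
      rw [hcard]
      have hcongr : ∀ i ∈ Finset.range (s+1),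
          (Real.log (4*((s:ℝ)+1)) - Real.log ((s + 1 + i - s : ℕ) : ℝ)) =
          (Real.log (4 * ((s+1 : ℕ) : ℝ)) - Real.log ((i:ℝ) + 1)) := by
        intro i _
        have : s + 1 + i - s = i + 1 := by omega
        rw [this]
        push_cast
        ring_nf
      rw [Finset.sum_congr rfl hcongr]
      have := sum_log_bound (s+1) (by omega)
      calc (∑ i ∈ Finset.range (s+1),
            (Real.log (4 * ((s+1 : ℕ) : ℝ)) - Real.log ((i:ℝ) + 1))) ≤
          ((s+1 : ℕ) : ℝ) * (Real.log 4 + 1) := this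
        _ = ((s:ℝ) + 1) * (Real.log 4 + 1) := by push_cast; ring
    calc (∑ n ∈ Finset.Ioc s (2*s+1), f n) ≤ _ := h1
      _ = (∑ n ∈ Finset.Ioc s (2*s+1),
            (Real.log (4*((s:ℝ)+1)) - Real.log ((n - s : ℕ) : ℝ))) +
          ∑ n ∈ Finset.Ioc s (2*s+1), (if n = s + 1 then Real.log ((s:ℝ)+1) else 0) :=
          Finset.sum_add_distrib
      _ ≤ ((s:ℝ) + 1) * (Real.log 4 + 1) + Real.log ((s:ℝ)+1) := by
          rw [h2]; linarith
  -- part b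
  have partb : (∑ n ∈ Finset.Ioc (2*s+1) k, f n) ≤ (4/3) * ((s:ℝ) + 1) := by
    have h1 : (∑ n ∈ Finset.Ioc (2*s+1) k, f n) ≤
        ∑ n ∈ Finset.Ioc (2*s+1) k, (4*(k:ℝ)/3) * (1/(n:ℝ)^2) := by
      apply Finset.sum_le_sum
      intro n hn
      simp only [Finset.mem_Ioc] at hn
      exact partb_pt k n hn.1 hn.2
    have h2 : (∑ n ∈ Finset.Ioc (2*s+1) k, (4*(k:ℝ)/3) * (1/(n:ℝ)^2)) =
        (4*(k:ℝ)/3) * ∑ n ∈ Finset.Ioc (2*s+1) k, (1:ℝ)/(n:ℝ)^2 := by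
      rw [Finset.mul_sum]
    have h3 := sum_inv_sq_le (2*s+1) (by omega) k
    have hk0 : (0:ℝ) ≤ (k:ℝ) := Nat.cast_nonneg k
    have h4 : (4*(k:ℝ)/3) * (∑ n ∈ Finset.Ioc (2*s+1) k, (1:ℝ)/(n:ℝ)^2) ≤
        (4*(k:ℝ)/3) * (1/((2*s+1 : ℕ):ℝ)) := by
      apply mul_le_mul_of_nonneg_left h3 (by positivity)
    have h5 : (4*(k:ℝ)/3) * (1/((2*s+1 : ℕ):ℝ)) ≤ (4/3) * ((s:ℝ) + 1) := by
      have hcast : ((2*s+1 : ℕ):ℝ) = 2*(s:ℝ)+1 := by push_cast; ring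
      rw [hcast]
      have hpos : (0:ℝ) < 2*(s:ℝ)+1 := by positivity
      rw [mul_one_div, div_le_iff₀ hpos]
      have hkb : (k:ℝ) ≤ ((s:ℝ)+1) * ((s:ℝ)+1) := by
        have : k ≤ (s+1)*(s+1) := le_of_lt hks
        exact_mod_cast this
      nlinarith [Nat.cast_nonneg (α := ℝ) s]
    linarith
  rw [split] at step2
  linarith [step1, step2, parta, partb]



/-- `log ĝ(k) − log ∏_{√k < p ≤ k} p/(p − a_{0,p}(k)) = O(√k · log log k)`.
Here `√k < p` is expressed as `k < p * p`. -/
theorem log_ghat_sub_main_term :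
    (fun k : ℕ => Real.log ((ghat k : ℝ)) -
        Real.log (∏ p ∈ (Finset.range (k + 1)).filter (fun p => p.Prime ∧ k < p * p),
          (p : ℝ) / (p - digit 0 p k)))
      =O[atTop] (fun k : ℕ => Real.sqrt k * Real.log (Real.log k)) := by

  have step1 : (fun k : ℕ => Real.log ((ghat k : ℝ)) -
        Real.log (∏ p ∈ (Finset.range (k + 1)).filter (fun p => p.Prime ∧ k < p * p),
          (p : ℝ) / (p - digit 0 p k)))
      =O[atTop] (fun k : ℕ => Real.sqrt k) := by
    rw [Asymptotics.isBigO_iff]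
    refine ⟨100, Filter.eventually_atTop.2 ⟨16, fun k hk => ?_⟩⟩
    set s := Nat.sqrt k with hs
    have hs4 : 4 ≤ s := Nat.le_sqrt.2 (by omega)
    have hDeq := diff_eq k
    -- nonnegativity of the difference
    have hnonneg : 0 ≤ Real.log ((ghat k : ℝ)) -
        Real.log (∏ p ∈ (Finset.range (k + 1)).filter (fun p => p.Prime ∧ k < p * p),
          (p : ℝ) / (p - digit 0 p k)) := by
      rw [hDeq]
      have h1 : 0 ≤ ∑ p ∈ (Finset.range (k + 1)).filter (fun p => p.Prime ∧ ¬ k < p * p),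
          ∑ i ∈ Finset.range (Nat.log p k + 1),
            (Real.log p - Real.log ((p - digit i p k : ℕ))) := by
        apply Finset.sum_nonneg
        intro p hp
        have hp0 : 0 < p := (Finset.mem_filter.1 hp).2.1.pos
        exact Finset.sum_nonneg fun i _ => term_nonneg hp0 i k
      have h2 : 0 ≤ ∑ p ∈ (Finset.range (k + 1)).filter (fun p => p.Prime ∧ k < p * p),
          ((∑ i ∈ Finset.range (Nat.log p k + 1),
            (Real.log p - Real.log ((p - digit i p k : ℕ)))) -
            (Real.log p - Real.log ((p - digit 0 p k : ℕ)))) := by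
        apply Finset.sum_nonneg
        intro p hp
        simp only [Finset.mem_filter, Finset.mem_range, Nat.lt_succ_iff] at hp
        obtain ⟨hpk, hprime, hkpp⟩ := hp
        have hL : Nat.log p k = 1 := by
          apply Nat.log_eq_of_pow_le_of_lt_pow
          · simpa using hpk
          · calc k < p * p := hkpp
              _ = p ^ (1+1) := by ring
        rw [hL, Finset.sum_range_succ, Finset.sum_range_one]
        have := term_nonneg hprime.pos 1 k
        linarith
      linarith
    rw [Real.norm_eq_abs, abs_of_nonneg hnonneg, Real.norm_eq_abs,
      abs_of_nonneg (Real.sqrt_nonneg _)]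
    rw [hDeq]
    have hsmall := small_sum_le k (by omega)
    have hlarge := large_sum_le k (by omega)
    -- numeric comparison
    set x := Real.sqrt k with hx
    have hx4 : (4:ℝ) ≤ x := by
      rw [hx, show (4:ℝ) = Real.sqrt 16 by
        rw [show (16:ℝ) = 4^2 by norm_num, Real.sqrt_sq (by norm_num)]]
      exact Real.sqrt_le_sqrt (by exact_mod_cast hk)
    have hsx : (s:ℝ) ≤ x := by
      rw [hx]
      apply Real.le_sqrt' (by exact_mod_cast (by omega : 0 < s)) |>.2
      exact_mod_cast Nat.sqrt_le' k
    have hlog4 : Real.log 4 ≤ 3/2 := by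
      rw [show (4:ℝ) = 2^2 by norm_num, Real.log_pow]
      have := Real.log_two_lt_d9
      push_cast
      linarith
    have hlogk : Real.log k = 2 * Real.log x := by
      rw [hx, Real.log_sqrt (Nat.cast_nonneg k)]
      ring
    set y := Real.sqrt x with hy
    have hy2 : (2:ℝ) ≤ y := by
      rw [hy, show (2:ℝ) = Real.sqrt 4 by
        rw [show (4:ℝ) = 2^2 by norm_num, Real.sqrt_sq (by norm_num)]]
      exact Real.sqrt_le_sqrt hx4
    have hyy : y * y = x := Real.mul_self_sqrt (by linarith)
    have hsqs : ((Nat.sqrt s : ℕ) : ℝ) ≤ y := by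
      calc ((Nat.sqrt s : ℕ) : ℝ) ≤ Real.sqrt s := by
            apply Real.le_sqrt' (by exact_mod_cast Nat.sqrt_pos.2 (by omega)) |>.2
            exact_mod_cast Nat.sqrt_le' s
        _ ≤ y := by rw [hy]; exact Real.sqrt_le_sqrt hsx
    have hlogx : Real.log x ≤ x - 1 := Real.log_le_sub_one_of_pos (by linarith)
    have hlogy : Real.log y ≤ y - 1 := Real.log_le_sub_one_of_pos (by linarith)
    have hlogx2 : Real.log x = 2 * Real.log y := by
      rw [← hyy, Real.log_mul (by linarith) (by linarith)]
      ring
    have hlogs1 : Real.log ((s:ℝ) + 1) ≤ x := by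
      have h1 : Real.log ((s:ℝ)+1) ≤ (s:ℝ) + 1 - 1 := Real.log_le_sub_one_of_pos (by positivity)
      linarith
    -- combine
    have hterm2 : ((Nat.sqrt s : ℕ) : ℝ) * Real.log k + Real.log k ≤ 6 * x := by
      have hlk : Real.log k ≤ 4 * (y - 1) := by
        rw [hlogk, hlogx2]; linarith
      have hlk0 : 0 ≤ Real.log k := Real.log_nonneg (by exact_mod_cast (by omega : 1 ≤ k))
      have hy0 : (0:ℝ) ≤ y := by linarith
      nlinarith
    have hlog40 : (0:ℝ) ≤ Real.log 4 := Real.log_nonneg (by norm_num)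
    have hp1 : (s:ℝ) * Real.log 4 ≤ x * (3/2) :=
      mul_le_mul hsx hlog4 hlog40 (by linarith)
    have hp2 : ((s:ℝ) + 1) * (Real.log 4 + 1) ≤ (x + 1) * (5/2) :=
      mul_le_mul (by linarith) (by linarith) (by linarith) (by linarith)
    linarith [hsmall, hlarge, hlogs1, hterm2]
  have step2 : (fun k : ℕ => Real.sqrt k)
      =O[atTop] (fun k : ℕ => Real.sqrt k * Real.log (Real.log k)) := by
    rw [Asymptotics.isBigO_iff]
    refine ⟨1, Filter.eventually_atTop.2 ⟨16, fun k hk => ?_⟩⟩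
    have h16 : (16:ℝ) ≤ k := by exact_mod_cast hk
    have hlogk : Real.exp 1 ≤ Real.log k := by
      have h1 : Real.log 16 ≤ Real.log k := Real.log_le_log (by norm_num) h16
      have h2 : (2.7182818286 : ℝ) ≤ Real.log 16 := by
        rw [show (16:ℝ) = 2^4 by norm_num, Real.log_pow]
        have := Real.log_two_gt_d9
        push_cast
        linarith
      have := Real.exp_one_lt_d9
      linarith
    have hll : 1 ≤ Real.log (Real.log k) := by
      have := Real.log_le_log (Real.exp_pos 1) hlogk
      rwa [Real.log_exp] at this
    rw [Real.norm_eq_abs, Real.norm_eq_abs, abs_of_nonneg (Real.sqrt_nonneg _),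
      abs_of_nonneg (by positivity : (0:ℝ) ≤ Real.sqrt k * Real.log (Real.log k))]
    nlinarith [Real.sqrt_nonneg (k:ℝ)]
  exact (step1.trans step2).congr_right (fun _ => rfl)
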